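/- For every natural number n, the integer ⌊⌊√2·n⌋ · 2√2 · n⌋ − ⌊√2·n⌋² − 2n² + 1 equals 1 if n = 0, and equals 0 if n ≥ 1. -/

import Mathlib

theorem haland_knutson_indicator (n : ℕ) :
    ⌊(⌊Real.sqrt 2 * n⌋ : ℝ) * 2 * Real.sqrt 2 * n⌋ - ⌊Real.sqrt 2 * n⌋ ^ 2
        - 2 * (n : ℤ) ^ 2 + 1 = if n = 0 then 1 else 0 := by
  rcases eq_or_ne n 0 with h | h
  · subst h; simp
  · simp only [h, if_false]
    set m : ℤ := ⌊Real.sqrt 2 * n⌋ with hm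
    have hirr : Irrational (Real.sqrt 2 * n) := by
      have := irrational_sqrt_two.mul_natCast h
      exact this
    have h1 : (m : ℝ) < Real.sqrt 2 * n :=
      lt_of_le_of_ne (Int.floor_le _) (fun he => (hirr.ne_int m) he.symm)
    have h2 : Real.sqrt 2 * n < m + 1 := Int.lt_floor_add_one _
    have hs : Real.sqrt 2 * Real.sqrt 2 = 2 := Real.mul_self_sqrt (by norm_num)
    have key : ⌊(m : ℝ) * 2 * Real.sqrt 2 * n⌋ = m ^ 2 + 2 * (n : ℤ) ^ 2 - 1 := by
      rw [Int.floor_eq_iff]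
      constructor
      · push_cast
        nlinarith [mul_pos (sub_pos.2 h1) (sub_pos.2 h1)]
      · push_cast
        nlinarith [mul_pos (sub_pos.2 h1) (sub_pos.2 h1)]
    rw [key]; ring
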